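/- For any prime p > 2, the triple sum ∑_{m1=0}^{p-1} ∑_{m2=0}^{p-1} ∑_{m3=0}^{p-1} (m1+m2+m3)! / (m1! · m2! · m3!) is congruent to 1 modulo p. -/

import Mathlib

lemma mult3_eq (a b c : ℕ) :
    Nat.multinomial Finset.univ ![a, b, c] = (a + b + c).choose (a + b) * (a + b).choose a := by
  have huniv : (Finset.univ : Finset (Fin 3)) = {0, 1, 2} := by decide
  rw [huniv, Nat.multinomial_insert (by decide), Nat.multinomial_insert (by decide)]
  simp
  rw [← Nat.add_assoc, Nat.choose_mul (by omega)]
  have h1 : a + b + c - a = b + c := by omega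
  have h2 : a + b - a = b := by omega
  rw [h1, h2]

lemma hockey (k m : ℕ) : (∑ c ∈ Finset.range m, (k + c).choose k) = (k + m).choose (k + 1) := by
  induction m with
  | zero => simp [Nat.choose_eq_zero_of_lt (Nat.lt_succ_self k)]
  | succ n ih =>
      rw [Finset.sum_range_succ, ih, ← Nat.add_assoc, Nat.choose_succ_succ' (k + n) k]
      omega

lemma lucas_eval (p k : ℕ) (hp : p.Prime) (hk : k ≤ 2 * p - 2) :
    (((k + p).choose (k + 1) : ℕ) : ZMod p) = if k = p - 1 then 1 else 0 := by
  haveI : Fact p.Prime := ⟨hp⟩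
  have hp1 : 1 < p := hp.one_lt
  have h := (Choose.choose_modEq_choose_mod_mul_choose_div (n := k + p) (k := k + 1) (p := p))
  have h' : (((k + p).choose (k + 1) : ℤ) : ZMod p) =
      ((((k + p) % p).choose ((k + 1) % p) * ((k + p) / p).choose ((k + 1) / p) : ℤ) : ZMod p) := by
    exact_mod_cast (ZMod.intCast_eq_intCast_iff _ _ _).mpr h
  push_cast at h'
  rw [h']
  rcases lt_trichotomy k (p - 1) with hlt | heq | hgt
  · have e1 : (k + p) % p = k := by
      rw [Nat.add_mod_right]; exact Nat.mod_eq_of_lt (by omega)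
    have e2 : (k + 1) % p = k + 1 := Nat.mod_eq_of_lt (by omega)
    rw [e1, e2, Nat.choose_eq_zero_of_lt (by omega), if_neg (by omega)]
    simp
  · subst heq
    have e1 : (p - 1 + p) % p = p - 1 := by
      rw [Nat.add_mod_right]; exact Nat.mod_eq_of_lt (by omega)
    have e2 : (p - 1 + 1) % p = 0 := by rw [show p - 1 + 1 = p by omega, Nat.mod_self]
    have e3 : (p - 1 + p) / p = 1 := by
      rw [Nat.add_div_right _ (by omega : 0 < p), Nat.div_eq_of_lt (by omega)]
    have e4 : (p - 1 + 1) / p = 1 := by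
      rw [show p - 1 + 1 = p by omega]; exact Nat.div_self (by omega)
    rw [e1, e2, e3, e4]
    simp
  · have e1 : (k + p) % p = k - p := by
      rw [Nat.add_mod_right, Nat.mod_eq_sub_mod (by omega)]
      exact Nat.mod_eq_of_lt (by omega)
    have e2 : (k + 1) % p = k + 1 - p := by
      rw [Nat.mod_eq_sub_mod (by omega)]
      exact Nat.mod_eq_of_lt (by omega)
    rw [e1, e2, Nat.choose_eq_zero_of_lt (by omega), if_neg (by omega)]
    simp

theorem triple_sum_multinomial_mod_p (p : ℕ) (hp : p.Prime) (hp2 : 2 < p) :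
    (∑ m1 ∈ Finset.range p, ∑ m2 ∈ Finset.range p, ∑ m3 ∈ Finset.range p,
      (Nat.multinomial Finset.univ ![m1, m2, m3] : ZMod p)) = 1 := by
  haveI : Fact p.Prime := ⟨hp⟩
  have hp1 : 1 < p := hp.one_lt
  have step1 : ∀ m1 ∈ Finset.range p, ∀ m2 ∈ Finset.range p,
      (∑ m3 ∈ Finset.range p, (Nat.multinomial Finset.univ ![m1, m2, m3] : ZMod p))
      = if m1 + m2 = p - 1 then ((m1 + m2).choose m1 : ZMod p) else 0 := by
    intro m1 hm1 m2 hm2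
    rw [Finset.mem_range] at hm1 hm2
    have : (∑ m3 ∈ Finset.range p, (Nat.multinomial Finset.univ ![m1, m2, m3] : ZMod p))
        = (∑ m3 ∈ Finset.range p, (((m1 + m2) + m3).choose (m1 + m2) : ZMod p))
          * ((m1 + m2).choose m1 : ZMod p) := by
      rw [Finset.sum_mul]
      refine Finset.sum_congr rfl fun m3 _ => ?_
      rw [mult3_eq]
      push_cast
      ring
    rw [this, ← Nat.cast_sum, hockey, lucas_eval p (m1 + m2) hp (by omega)]
    split_ifs with h
    · rw [one_mul]
    · rw [zero_mul]
  rw [Finset.sum_congr rfl (fun m1 hm1 => Finset.sum_congr rfl (step1 m1 hm1))]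
  have step2 : ∀ m1 ∈ Finset.range p,
      (∑ m2 ∈ Finset.range p,
        if m1 + m2 = p - 1 then ((m1 + m2).choose m1 : ZMod p) else 0)
      = ((p - 1).choose m1 : ZMod p) := by
    intro m1 hm1
    rw [Finset.mem_range] at hm1
    rw [Finset.sum_eq_single (p - 1 - m1)]
    · rw [if_pos (by omega), show m1 + (p - 1 - m1) = p - 1 by omega]
    · intro b _ hb
      rw [if_neg (by omega)]
    · intro habs
      exact absurd (Finset.mem_range.mpr (by omega)) habs
  rw [Finset.sum_congr rfl step2, ← Nat.cast_sum,
    show (∑ m1 ∈ Finset.range p, (p - 1).choose m1)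
      = ∑ m1 ∈ Finset.range ((p - 1) + 1), (p - 1).choose m1 by rw [show p - 1 + 1 = p by omega],
    Nat.sum_range_choose]
  have h2 : (2 : ZMod p) ≠ 0 := by
    intro h
    have : ((2 : ℕ) : ZMod p) = 0 := by exact_mod_cast h
    rw [ZMod.natCast_eq_zero_iff] at this
    exact absurd (Nat.le_of_dvd (by norm_num) this) (by omega)
  calc ((2 ^ (p - 1) : ℕ) : ZMod p) = (2 : ZMod p) ^ (p - 1) := by push_cast; ring
    _ = 1 := ZMod.pow_card_sub_one_eq_one h2
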